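/- Let G be a tree, ℓ a node, S ⊆ X nonempty, z = π(ℓ,S), t ∈ X, and x = π(ℓ, S∪{t}). If x ∈ H(S), then x = z. -/
import Mathlib


open SimpleGraph

/-- `z` lies on a path from `x` to `y` in `G` (in a tree, the unique path). -/
def pathSet {X : Type*} (G : SimpleGraph X) (x y z : X) : Prop :=
  ∃ p : G.Walk x y, p.IsPath ∧ z ∈ p.support

/-- The path hull `H(S)`: union of paths between pairs of nodes of `S`. -/
def hull {X : Type*} (G : SimpleGraph X) (S : Set X) (z : X) : Prop :=
  ∃ x ∈ S, ∃ y ∈ S, pathSet G x y z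

/-- `m` is a distance minimizer of `x` on the path hull of `S`. -/
def isMinimizer {X : Type*} (G : SimpleGraph X) (x : X) (S : Set X) (m : X) : Prop :=
  hull G S m ∧ ∀ y, hull G S y → G.dist x m ≤ G.dist x y

/-- `ℓ` is a leaf: it has exactly one neighbor. -/
def isLeaf {X : Type*} (G : SimpleGraph X) (ℓ : X) : Prop := ∃! x, G.Adj ℓ x

/-- `t` is the top-ranked alternative of the strict preference `P`. -/
def isTop {X : Type*} (P : X → X → Prop) (t : X) : Prop := ∀ y, y ≠ t → P t y

/-- `P` with peak `t` is single-peaked on the tree `G`. -/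
def singlePeakedAt {X : Type*} (G : SimpleGraph X) (P : X → X → Prop) (t : X) : Prop :=
  ∀ a b, a ≠ b → pathSet G t a b → P b a

section Aux

variable {X : Type*} [DecidableEq X] {G : SimpleGraph X}

lemma tree_path_eq (hG : G.IsTree) {u v : X} {p q : G.Walk u v}
    (hp : p.IsPath) (hq : q.IsPath) : p = q :=
  (hG.existsUnique_path u v).unique hp hq

lemma tree_path_length (hG : G.IsTree) {u v : X} {p : G.Walk u v} (hp : p.IsPath) :
    p.length = G.dist u v := by
  obtain ⟨w, hw⟩ := hG.isConnected.exists_walk_length_eq_dist u v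
  have h1 := dist_le p
  have h2 : p = w.bypass := tree_path_eq hG hp w.bypass_isPath
  have h3 := w.length_bypass_le
  have h4 : p.length = w.bypass.length := by rw [h2]
  omega

lemma tree_dist_split (hG : G.IsTree) {u v w : X} {p : G.Walk u v}
    (hp : p.IsPath) (hw : w ∈ p.support) :
    G.dist u w + G.dist w v = G.dist u v := by
  have h1 : (p.takeUntil w hw).length = G.dist u w := tree_path_length hG (hp.takeUntil hw)
  have h2 : (p.dropUntil w hw).length = G.dist w v := tree_path_length hG (hp.dropUntil hw)
  have h3 : (p.takeUntil w hw).length + (p.dropUntil w hw).length = p.length := by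
    rw [← SimpleGraph.Walk.length_append, p.take_spec hw]
  have h4 : p.length = G.dist u v := tree_path_length hG hp
  omega

/-- If `m` minimizes distance to `ℓ` on a path `p : a → b` in a tree, then `m` lies on the
path from `ℓ` to `b`, i.e. `d(ℓ,b) = d(ℓ,m) + d(m,b)`. -/
lemma tree_proj (hG : G.IsTree) {ℓ a b : X} {p : G.Walk a b} (hp : p.IsPath)
    {m : X} (hm : m ∈ p.support)
    (hmin : ∀ v ∈ p.support, G.dist ℓ m ≤ G.dist ℓ v) :
    G.dist ℓ b = G.dist ℓ m + G.dist m b := by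
  obtain ⟨q0⟩ : G.Reachable ℓ m := hG.isConnected ℓ m
  have hqp : q0.bypass.IsPath := q0.bypass_isPath
  set q := q0.bypass with hqdef
  set r := p.dropUntil m hm with hrdef
  have hrp : r.IsPath := hp.dropUntil hm
  have hdisj : ∀ v, v ∈ q.support → v ∈ r.support.tail → False := by
    intro v hvq hvr
    have hvr' : v ∈ r.support := List.mem_of_mem_tail hvr
    have hvp : v ∈ p.support := p.support_dropUntil_subset hm hvr'
    have h1 := hmin v hvp
    have h2 := tree_dist_split hG hqp hvq
    have hvm : G.dist v m = 0 := by omega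
    have hveq : v = m := hG.isConnected.dist_eq_zero_iff.mp hvm
    subst hveq
    have hn := hrp.support_nodup
    rw [r.support_eq_cons] at hn
    exact (List.nodup_cons.mp hn).1 hvr
  have hs : (q.append r).IsPath := by
    rw [SimpleGraph.Walk.isPath_def, SimpleGraph.Walk.support_append]
    exact List.Nodup.append hqp.support_nodup
      (hrp.support_nodup.sublist (List.tail_sublist _)) hdisj
  have hlen : (q.append r).length = G.dist ℓ b := tree_path_length hG hs
  rw [SimpleGraph.Walk.length_append] at hlen
  have hq1 : q.length = G.dist ℓ m := tree_path_length hG hqp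
  have hr1 : r.length = G.dist m b := tree_path_length hG hrp
  omega

/-- The path hull is convex: it contains the path between any two of its points. -/
lemma hull_convex (hG : G.IsTree) {S : Set X} {x z w : X}
    (hx : hull G S x) (hz : hull G S z) (hw : pathSet G x z w) : hull G S w := by
  obtain ⟨a, haS, b, hbS, pab, hpab, hxab⟩ := hx
  obtain ⟨c, hcS, d, hdS, pcd, hpcd, hzcd⟩ := hz
  obtain ⟨r, hrp, hwr⟩ := hw
  obtain ⟨q0⟩ : G.Reachable a c := hG.isConnected a c
  set W : G.Walk x z :=
    ((pab.takeUntil x hxab).reverse.append q0.bypass).append (pcd.takeUntil z hzcd) with hWdef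
  have hreq : r = W.bypass := tree_path_eq hG hrp W.bypass_isPath
  have hwW : w ∈ W.support := W.support_bypass_subset (hreq ▸ hwr)
  rw [hWdef, SimpleGraph.Walk.mem_support_append_iff,
    SimpleGraph.Walk.mem_support_append_iff] at hwW
  rcases hwW with (hw1 | hw2) | hw3
  · rw [SimpleGraph.Walk.support_reverse, List.mem_reverse] at hw1
    exact ⟨a, haS, b, hbS, pab, hpab, pab.support_takeUntil_subset hxab hw1⟩
  · exact ⟨a, haS, c, hcS, q0.bypass, q0.bypass_isPath, hw2⟩
  · exact ⟨c, hcS, d, hdS, pcd, hpcd, pcd.support_takeUntil_subset hzcd hw3⟩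

end Aux

theorem minimizer_eq_of_mem_hull {X : Type*} [Fintype X]
    (G : SimpleGraph X) (hG : G.IsTree)
    (ℓ : X) (S : Set X) (hS : S.Nonempty) (t : X)
    (z x : X)
    (hz : isMinimizer G ℓ S z)
    (hx : isMinimizer G ℓ (S ∪ {t}) x)
    (hxS : hull G S x) :
    x = z := by
  classical
  obtain ⟨hzH, hzmin⟩ := hz
  obtain ⟨hxH, hxmin⟩ := hx
  have hsub : ∀ w, hull G S w → hull G (S ∪ {t}) w := by
    rintro w ⟨a, ha, b, hb, h⟩
    exact ⟨a, Or.inl ha, b, Or.inl hb, h⟩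
  have hde : G.dist ℓ x = G.dist ℓ z :=
    le_antisymm (hxmin z (hsub z hzH)) (hzmin x hxS)
  obtain ⟨r0⟩ : G.Reachable x z := hG.isConnected x z
  have hrp : r0.bypass.IsPath := r0.bypass_isPath
  set r := r0.bypass with hrdef
  have hxr : x ∈ r.support := r.start_mem_support
  obtain ⟨m, hmmem, hmmin⟩ := r.support.toFinset.exists_min_image (G.dist ℓ)
    ⟨x, List.mem_toFinset.mpr hxr⟩
  rw [List.mem_toFinset] at hmmem
  have hmmin' : ∀ v ∈ r.support, G.dist ℓ m ≤ G.dist ℓ v := fun v hv =>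
    hmmin v (List.mem_toFinset.mpr hv)
  have hmH : hull G S m := hull_convex hG hxS hzH ⟨r, hrp, hmmem⟩
  have h1 : G.dist ℓ z = G.dist ℓ m + G.dist m z := tree_proj hG hrp hmmem hmmin'
  have h2 : G.dist ℓ x = G.dist ℓ m + G.dist m x := by
    refine tree_proj hG hrp.reverse ?_ ?_
    · rw [SimpleGraph.Walk.support_reverse, List.mem_reverse]; exact hmmem
    · intro v hv
      rw [SimpleGraph.Walk.support_reverse, List.mem_reverse] at hv
      exact hmmin' v hv
  have h3 : G.dist ℓ z ≤ G.dist ℓ m := hzmin m hmH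
  have hmz : G.dist m z = 0 := by omega
  have hmx : G.dist m x = 0 := by omega
  have e1 : m = z := hG.isConnected.dist_eq_zero_iff.mp hmz
  have e2 : m = x := hG.isConnected.dist_eq_zero_iff.mp hmx
  rw [← e1, ← e2]
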